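/- Let p ≥ 1 be an integer, 0 ≤ m ≤ p − 1, and u > arccosh(3/2). Then 4p²π² − (4m+3)u² + 4pu·φ(u) > 0, where φ(u) = arccosh(cosh u − 1/2). -/
import Mathlib


noncomputable def arcosh (x : ℝ) : ℝ := Real.log (x + Real.sqrt (x ^ 2 - 1))

noncomputable def kappa : ℝ := arcosh (3 / 2)

noncomputable def phi (u : ℝ) : ℝ := arcosh (Real.cosh u - 1 / 2)

lemma sqrt5_sq : Real.sqrt 5 ^ 2 = 5 := Real.sq_sqrt (by norm_num)

lemma sqrt5_gt : 2 < Real.sqrt 5 := by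
  nlinarith [sqrt5_sq, Real.sqrt_nonneg 5]

lemma kappa_eq : kappa = Real.log ((3 + Real.sqrt 5) / 2) := by
  have h : ((3:ℝ)/2) ^ 2 - 1 = 5/4 := by norm_num
  have h2 : Real.sqrt (5/4) = Real.sqrt 5 / 2 := by
    rw [show (5:ℝ)/4 = (Real.sqrt 5 / 2)^2 by nlinarith [sqrt5_sq]]
    exact Real.sqrt_sq (by positivity)
  unfold kappa arcosh
  rw [h, h2]
  ring_nf

lemma kappa_pos : 0 < kappa := by
  rw [kappa_eq]
  apply Real.log_pos
  nlinarith [sqrt5_gt]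

lemma kappa_lt_pi : kappa < Real.pi := by
  rw [kappa_eq]
  have h1 : Real.log ((3 + Real.sqrt 5) / 2) ≤ (3 + Real.sqrt 5) / 2 - 1 :=
    Real.log_le_sub_one_of_pos (by nlinarith [sqrt5_gt])
  have h5 : Real.sqrt 5 < 5/2 := by nlinarith [sqrt5_sq, Real.sqrt_nonneg 5]
  nlinarith [Real.pi_gt_three]

lemma arcosh_cosh (v : ℝ) (hv : 0 ≤ v) : arcosh (Real.cosh v) = v := by
  unfold arcosh
  have h1 : Real.cosh v ^ 2 - 1 = Real.sinh v ^ 2 := by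
    have := Real.cosh_sq v; linarith
  rw [h1, Real.sqrt_sq (by
    have he : Real.exp (-v) ≤ Real.exp v := Real.exp_le_exp.2 (by linarith)
    rw [Real.sinh_eq]; linarith), Real.cosh_add_sinh, Real.log_exp]

lemma arcosh_mono {x y : ℝ} (hx : 1 ≤ x) (hxy : x ≤ y) : arcosh x ≤ arcosh y := by
  unfold arcosh
  apply Real.log_le_log (by positivity)
  have : Real.sqrt (x^2-1) ≤ Real.sqrt (y^2-1) := by
    apply Real.sqrt_le_sqrt; nlinarith
  linarith

lemma cosh_kappa : Real.cosh kappa = 3/2 := by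
  rw [kappa_eq, Real.cosh_eq, Real.exp_log (by nlinarith [sqrt5_gt]),
    Real.exp_neg, Real.exp_log (by nlinarith [sqrt5_gt])]
  have h : ((3:ℝ) + Real.sqrt 5) / 2 ≠ 0 := by nlinarith [sqrt5_gt]
  field_simp
  nlinarith [sqrt5_sq]

lemma sinh_kappa : Real.sinh kappa = Real.sqrt 5 / 2 := by
  rw [kappa_eq, Real.sinh_eq, Real.exp_log (by nlinarith [sqrt5_gt]),
    Real.exp_neg, Real.exp_log (by nlinarith [sqrt5_gt])]
  have h : ((3:ℝ) + Real.sqrt 5) / 2 ≠ 0 := by nlinarith [sqrt5_gt]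
  field_simp
  nlinarith [sqrt5_sq]

lemma key_ineq {u : ℝ} (hu : kappa ≤ u) :
    Real.cosh (u - kappa) ≤ Real.cosh u - 1/2 := by
  rw [Real.cosh_sub, cosh_kappa, sinh_kappa]
  -- need: cosh u * (3/2) - sinh u * (√5/2) ≤ cosh u - 1/2
  -- i.e. cosh u + 1 ≤ √5 * sinh u
  have ht : (3 + Real.sqrt 5) / 2 ≤ Real.exp u := by
    calc (3 + Real.sqrt 5) / 2 = Real.exp kappa := by
          rw [kappa_eq, Real.exp_log (by nlinarith [sqrt5_gt])]
      _ ≤ Real.exp u := Real.exp_le_exp.2 hu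
  have htpos : 0 < Real.exp u := Real.exp_pos u
  have hinv : Real.exp (-u) = (Real.exp u)⁻¹ := Real.exp_neg u
  rw [Real.cosh_eq, Real.sinh_eq, hinv]
  set t := Real.exp u with hT
  have hti : t * t⁻¹ = 1 := mul_inv_cancel₀ (ne_of_gt htpos)
  have h3 : Real.sqrt 5 + 1 ≤ (Real.sqrt 5 - 1) * t := by
    nlinarith [sqrt5_sq, sqrt5_gt, ht]
  have h4 : t + 1 ≤ Real.sqrt 5 * (t - 1) := by nlinarith
  have h5 := mul_le_mul_of_nonneg_right h4 (by linarith : (0:ℝ) ≤ t + 1)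
  have hipos : 0 < t⁻¹ := inv_pos.2 htpos
  nlinarith [h5, hti, htpos, hipos, mul_pos htpos hipos]

lemma phi_ge {u : ℝ} (hu : kappa ≤ u) : u - kappa ≤ phi u := by
  have h1 : Real.cosh (u - kappa) ≤ Real.cosh u - 1/2 := key_ineq hu
  have h2 : (1:ℝ) ≤ Real.cosh (u - kappa) := Real.one_le_cosh _
  have := arcosh_mono h2 h1
  rwa [arcosh_cosh _ (by linarith)] at this

theorem quad_pos' (p m : ℕ) (hp : 1 ≤ p) (hm : m ≤ p - 1) (u : ℝ) (hu : kappa < u) :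
    0 < 4 * p ^ 2 * Real.pi ^ 2 - (4 * m + 3) * u ^ 2 + 4 * p * u * phi u := by
  have hφ : u - kappa ≤ phi u := phi_ge (le_of_lt hu)
  have hκπ : kappa < Real.pi := kappa_lt_pi
  have hu0 : 0 < u := lt_trans kappa_pos hu
  have hp' : (1:ℝ) ≤ (p:ℝ) := by exact_mod_cast hp
  have hm' : (m:ℝ) + 1 ≤ (p:ℝ) := by
    have : m + 1 ≤ p := by omega
    exact_mod_cast this
  have h1 : 0 < phi u - u + Real.pi := by linarith
  have h2 : 0 < 4 * (p:ℝ) * u := by positivity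
  nlinarith [sq_nonneg (2*(p:ℝ)*Real.pi - u), mul_pos h2 h1, sq_nonneg u,
    mul_nonneg (mul_nonneg (by linarith : (0:ℝ) ≤ (p:ℝ) - 1 - m) (le_of_lt hu0)) (le_of_lt hu0)]
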